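/- For x, y in Dekker's system admitting representations with e(x) ≥ e(y), and z = fl(x+y) under any rounding that maps elements of D to themselves (faithful rounding), z admits a representation in D with exponent at most e(x) + 1. -/
import Mathlib


/-- Dekker's floating point number system as a set of reals. -/
def Dekker (β : ℤ) (t : ℕ) (Emin Emax : ℤ) : Set ℝ :=
  {x | ∃ m e : ℤ, |m| < β ^ t ∧ Emin ≤ e ∧ e ≤ Emax ∧ x = (m : ℝ) * (β : ℝ) ^ e}

/-- z = fl(x+y) admits a representation with exponent at most e(x) + 1. -/
theorem dekker_sum_exponent_bound
    (β : ℤ) (t : ℕ) (Emin Emax : ℤ) (hβ : 2 ≤ β) (ht : 1 ≤ t)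
    (fl : ℝ → ℝ)
    (hmem : ∀ x, fl x ∈ Dekker β t Emin Emax)
    (hfaithful : ∀ w ∈ Dekker β t Emin Emax, fl w = w)
    (hmono : ∀ a b : ℝ, |a| ≤ |b| → |fl a| ≤ |fl b|)
    (mx ex my ey : ℤ)
    (hmx : |mx| < β ^ t) (hex1 : Emin ≤ ex) (hex2 : ex ≤ Emax)
    (hmy : |my| < β ^ t) (hey1 : Emin ≤ ey) (hey2 : ey ≤ Emax)
    (hord : ey ≤ ex) :
    ∃ m e : ℤ, |m| < β ^ t ∧ Emin ≤ e ∧ e ≤ Emax ∧ e ≤ ex + 1 ∧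
      fl ((mx : ℝ) * (β : ℝ) ^ ex + (my : ℝ) * (β : ℝ) ^ ey) = (m : ℝ) * (β : ℝ) ^ e := by
  have hβR : (2 : ℝ) ≤ (β : ℝ) := by exact_mod_cast hβ
  have hβpos : (0 : ℝ) < (β : ℝ) := by linarith
  set s : ℝ := (mx : ℝ) * (β : ℝ) ^ ex + (my : ℝ) * (β : ℝ) ^ ey with hs
  obtain ⟨m, e, hm, he1, he2, hz⟩ := hmem s
  by_cases hcase : ex + 1 ≤ Emax
  · -- bound |fl s| by (β^t - 1) * β^(ex+1)
    have hwD : ((β ^ t - 1 : ℤ) : ℝ) * (β : ℝ) ^ (ex + 1) ∈ Dekker β t Emin Emax := by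
      refine ⟨β ^ t - 1, ex + 1, ?_, by omega, hcase, rfl⟩
      have : (0:ℤ) < β ^ t := pow_pos (by omega) t
      rw [abs_of_nonneg (by omega)]; omega
    have hwval : fl (((β ^ t - 1 : ℤ) : ℝ) * (β : ℝ) ^ (ex + 1)) =
        ((β ^ t - 1 : ℤ) : ℝ) * (β : ℝ) ^ (ex + 1) := hfaithful _ hwD
    have hbt : (1 : ℝ) ≤ ((β : ℝ)) ^ (t : ℕ) := one_le_pow₀ (by linarith)
    have hsle : |s| ≤ |((β ^ t - 1 : ℤ) : ℝ) * (β : ℝ) ^ (ex + 1)| := by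
      have hmxR : |(mx : ℝ)| ≤ (β : ℝ) ^ (t : ℕ) - 1 := by
        have : |mx| ≤ β ^ t - 1 := by omega
        push_cast [← Int.cast_abs]; exact_mod_cast this
      have hmyR : |(my : ℝ)| ≤ (β : ℝ) ^ (t : ℕ) - 1 := by
        have : |my| ≤ β ^ t - 1 := by omega
        push_cast [← Int.cast_abs]; exact_mod_cast this
      have hpx : (0:ℝ) < (β : ℝ) ^ ex := zpow_pos hβpos _
      have hpy : (0:ℝ) < (β : ℝ) ^ ey := zpow_pos hβpos _
      have hyx : (β : ℝ) ^ ey ≤ (β : ℝ) ^ ex :=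
        zpow_le_zpow_right₀ (by linarith) hord
      have h1 : |s| ≤ ((β : ℝ) ^ (t : ℕ) - 1) * (β : ℝ) ^ ex +
          ((β : ℝ) ^ (t : ℕ) - 1) * (β : ℝ) ^ ex := by
        calc |s| ≤ |(mx : ℝ) * (β : ℝ) ^ ex| + |(my : ℝ) * (β : ℝ) ^ ey| := abs_add_le _ _
        _ = |(mx : ℝ)| * (β : ℝ) ^ ex + |(my : ℝ)| * (β : ℝ) ^ ey := by
            rw [abs_mul, abs_mul, abs_of_pos hpx, abs_of_pos hpy]
        _ ≤ ((β : ℝ) ^ (t : ℕ) - 1) * (β : ℝ) ^ ex +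
            ((β : ℝ) ^ (t : ℕ) - 1) * (β : ℝ) ^ ex := by
            gcongr <;> linarith
      have h2 : (β : ℝ) ^ (ex + 1) = (β : ℝ) ^ ex * (β : ℝ) := by
        rw [zpow_add_one₀ (by linarith)]
      rw [abs_mul, abs_of_pos (zpow_pos hβpos _), h2]
      have h3 : |((β ^ t - 1 : ℤ) : ℝ)| = (β : ℝ) ^ (t : ℕ) - 1 := by
        rw [abs_of_nonneg] <;> push_cast <;> linarith
      rw [h3]
      nlinarith [mul_nonneg (mul_nonneg (by linarith : (0:ℝ) ≤ (β:ℝ) ^ (t:ℕ) - 1) hpx.le)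
        (by linarith : (0:ℝ) ≤ (β:ℝ) - 2)]
    have hzle : |fl s| ≤ ((β ^ t - 1 : ℤ) : ℝ) * (β : ℝ) ^ (ex + 1) := by
      have := hmono s _ hsle
      rw [hwval] at this
      calc |fl s| ≤ |((β ^ t - 1 : ℤ) : ℝ) * (β : ℝ) ^ (ex + 1)| := this
      _ = _ := by
          rw [abs_mul, abs_of_pos (zpow_pos hβpos _), abs_of_nonneg]
          push_cast
          have : (1 : ℝ) ≤ ((β : ℝ)) ^ (t : ℕ) := one_le_pow₀ (by linarith)
          linarith
    by_cases hle : e ≤ ex + 1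
    · exact ⟨m, e, hm, he1, he2, hle, hz⟩
    · -- rescale: e ≥ ex + 2
      push_neg at hle
      refine ⟨m * β ^ (e - (ex + 1)).toNat, ex + 1, ?_, by omega, hcase, le_refl _, ?_⟩
      · -- mantissa bound
        have hkey : |m * β ^ (e - (ex + 1)).toNat| ≤ β ^ t - 1 := by
          have heq : ((m * β ^ (e - (ex + 1)).toNat : ℤ) : ℝ) * (β : ℝ) ^ (ex + 1) = fl s := by
            rw [hz]
            push_cast
            rw [mul_assoc, ← zpow_natCast (β : ℝ), ← zpow_add₀ (by linarith : (β:ℝ) ≠ 0)]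
            congr 2
            omega
          have hppos : (0:ℝ) < (β : ℝ) ^ (ex + 1) := zpow_pos hβpos _
          have habs : |((m * β ^ (e - (ex + 1)).toNat : ℤ) : ℝ)| * (β : ℝ) ^ (ex + 1)
              = |fl s| := by rw [← heq, abs_mul, abs_of_pos hppos]
          have h5 : |((m * β ^ (e - (ex + 1)).toNat : ℤ) : ℝ)| * (β : ℝ) ^ (ex + 1)
              ≤ ((β ^ t - 1 : ℤ) : ℝ) * (β : ℝ) ^ (ex + 1) := by rw [habs]; exact hzle
          have h6 := le_of_mul_le_mul_right h5 hppos
          rw [← Int.cast_abs] at h6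
          exact_mod_cast h6
        omega
      · rw [hz]
        push_cast
        rw [mul_assoc, ← zpow_natCast (β : ℝ), ← zpow_add₀ (by linarith : (β:ℝ) ≠ 0)]
        congr 2
        omega
  · -- ex + 1 > Emax, so e ≤ Emax < ex + 1
    exact ⟨m, e, hm, he1, he2, by omega, hz⟩
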